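/- There is a quasi embedding from M(X) with the Dershowitz–Manna multiset order into Seq(X) with the Higman order; consequently, if Seq(X) is a well partial order then so is M(X). In particular, if X is a well partial order, then M(X) is a well partial order. -/

import Mathlib

/-- The Higman order on finite sequences over a partial order. -/
def HigmanLE {X : Type*} [PartialOrder X] (s t : List X) : Prop :=
  ∃ f : Fin s.length → Fin t.length, StrictMono f ∧ ∀ i, s.get i ≤ t.get (f i)

/-- The Dershowitz–Manna order on finite multisets (functions `X →₀ ℕ`). -/
def DMLE {X : Type*} [PartialOrder X] (σ τ : X →₀ ℕ) : Prop :=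
  ∀ x ∈ (σ - τ).support, ∃ y ∈ (τ - σ).support, x < y

open Classical in
lemma countIdx_eq {X : Type*} [PartialOrder X] (σ : X →₀ ℕ) (p : X → Prop) :
    (Finset.univ.filter fun i : Fin σ.toMultiset.toList.length =>
      p (σ.toMultiset.toList.get i)).card
      = ∑ z ∈ σ.support, if p z then σ z else 0 := by
  classical
  rw [Finset.card_filter]
  have h1 : ∑ i : Fin σ.toMultiset.toList.length,
      (if p (σ.toMultiset.toList.get i) then 1 else 0)
      = (σ.toMultiset.toList.map fun a => if p a then (1:ℕ) else 0).sum := by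
    rw [← Fin.sum_univ_fun_getElem σ.toMultiset.toList (fun a => if p a then (1:ℕ) else 0)]
    rfl
  rw [h1]
  rw [← Multiset.sum_coe, ← Multiset.map_coe, Multiset.coe_toList,
    Finset.sum_multiset_map_count, Finsupp.toFinset_toMultiset]
  apply Finset.sum_congr rfl
  intro z hz
  rw [Finsupp.count_toMultiset]
  simp [mul_ite]

open Classical in
lemma quasi_embed {X : Type*} [PartialOrder X] (σ τ : X →₀ ℕ)
    (h : HigmanLE σ.toMultiset.toList τ.toMultiset.toList) : DMLE σ τ := by
  classical
  obtain ⟨f, hmono, hle⟩ := h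
  intro x hx
  have hxlt : τ x < σ x := by
    rw [Finsupp.mem_support_iff, Finsupp.tsub_apply] at hx
    omega
  set F := σ.support ∪ τ.support with hF
  -- counting inequality for p = (x ≤ ·)
  have hcard : (Finset.univ.filter fun i : Fin σ.toMultiset.toList.length =>
        x ≤ σ.toMultiset.toList.get i).card
      ≤ (Finset.univ.filter fun i : Fin τ.toMultiset.toList.length =>
        x ≤ τ.toMultiset.toList.get i).card := by
    apply Finset.card_le_card_of_injOn f
    · intro i hi
      simp only [Finset.mem_coe, Finset.mem_filter, Finset.mem_univ, true_and] at hi ⊢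
      exact hi.trans (hle i)
    · exact fun a _ b _ hab => hmono.injective hab
  rw [countIdx_eq σ (fun z => x ≤ z), countIdx_eq τ (fun z => x ≤ z)] at hcard
  have hsub1 : σ.support ⊆ F := Finset.subset_union_left
  have hsub2 : τ.support ⊆ F := Finset.subset_union_right
  have e1 : ∑ z ∈ σ.support, (if x ≤ z then σ z else 0)
      = ∑ z ∈ F, (if x ≤ z then σ z else 0) := by
    apply Finset.sum_subset hsub1
    intro z _ hz
    rw [Finsupp.notMem_support_iff] at hz
    simp [hz]
  have e2 : ∑ z ∈ τ.support, (if x ≤ z then τ z else 0)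
      = ∑ z ∈ F, (if x ≤ z then τ z else 0) := by
    apply Finset.sum_subset hsub2
    intro z _ hz
    rw [Finsupp.notMem_support_iff] at hz
    simp [hz]
  rw [e1, e2] at hcard
  have hxF : x ∈ F := hsub1 (Finsupp.mem_support_iff.mpr (by omega))
  rw [← Finset.add_sum_erase F _ hxF, ← Finset.add_sum_erase F _ hxF] at hcard
  simp only [le_refl, if_true] at hcard
  have hsum : ∑ z ∈ F.erase x, (if x ≤ z then σ z else 0)
      < ∑ z ∈ F.erase x, (if x ≤ z then τ z else 0) := by omega
  obtain ⟨z, hzF, hz⟩ := Finset.exists_lt_of_sum_lt hsum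
  have hxz : x ≤ z := by by_contra hc; simp [hc] at hz
  rw [if_pos hxz, if_pos hxz] at hz
  refine ⟨z, ?_, lt_of_le_of_ne hxz (Ne.symm (Finset.ne_of_mem_erase hzF))⟩
  rw [Finsupp.mem_support_iff, Finsupp.tsub_apply]
  omega

lemma sublistForall₂_higman {X : Type*} [PartialOrder X] {s t : List X}
    (h : List.SublistForall₂ (· ≤ ·) s t) : HigmanLE s t := by
  obtain ⟨l, hf, hsl⟩ := List.sublistForall₂_iff.mp h
  obtain ⟨g, hg⟩ := List.sublist_iff_exists_fin_orderEmbedding_get_eq.mp hsl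
  have hlen : s.length = l.length := hf.length_eq
  refine ⟨fun i => g (Fin.cast hlen i), ?_, ?_⟩
  · intro a b hab
    exact g.strictMono (by simpa using hab)
  · intro i
    have h1 := hf.get i.2 (by rw [← hlen]; exact i.2)
    have h2 := hg (Fin.cast hlen i)
    simp only [Fin.cast] at h2 ⊢
    exact h1.trans_eq h2

theorem stmt_6 {X : Type*} [PartialOrder X] :
    (∃ e : (X →₀ ℕ) → List X, ∀ σ τ, HigmanLE (e σ) (e τ) → DMLE σ τ) ∧
      ((∀ s : ℕ → List X, ∃ i j, i < j ∧ HigmanLE (s i) (s j)) →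
        ∀ s : ℕ → (X →₀ ℕ), ∃ i j, i < j ∧ DMLE (s i) (s j)) ∧
      ((∀ s : ℕ → X, ∃ i j, i < j ∧ s i ≤ s j) →
        ∀ s : ℕ → (X →₀ ℕ), ∃ i j, i < j ∧ DMLE (s i) (s j)) := by
  classical
  refine ⟨⟨fun σ => σ.toMultiset.toList, quasi_embed⟩, ?_, ?_⟩
  · intro h s
    obtain ⟨i, j, hij, hh⟩ := h (fun n => (s n).toMultiset.toList)
    exact ⟨i, j, hij, quasi_embed _ _ hh⟩
  · intro h s
    have hpwo : (Set.univ : Set X).PartiallyWellOrderedOn (· ≤ ·) := by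
      rw [Set.partiallyWellOrderedOn_iff_exists_lt]
      intro f _
      exact h f
    have := hpwo.partiallyWellOrderedOn_sublistForall₂ (r := (· ≤ ·))
    obtain ⟨i, j, hij, hh⟩ := this.exists_lt (f := fun n => (s n).toMultiset.toList)
      (fun n x _ => Set.mem_univ x)
    exact ⟨i, j, hij, quasi_embed _ _ (sublistForall₂_higman hh)⟩
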